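/- If f : X → Y is a continuous open surjection between compact metrizable spaces, then the pushforward map P(f) : P(X) → P(Y) on spaces of probability measures with the weak-* topology is an open map. -/

import Mathlib

set_option linter.unusedSectionVars false
set_option maxHeartbeats 1000000

open scoped Classical ENNReal NNReal
open MeasureTheory Metric Set Filter Topology

lemma DE.frontier_union_subset' {Z : Type*} [TopologicalSpace Z] (s t : Set Z) :
    frontier (s ∪ t) ⊆ frontier s ∪ frontier t := by
  have : s ∪ t = (sᶜ ∩ tᶜ)ᶜ := by simp [Set.compl_inter]
  rw [this, frontier_compl]
  refine (frontier_inter_subset _ _).trans ?_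
  rw [frontier_compl, frontier_compl]
  intro x hx
  rcases hx with h | h
  · exact Or.inl h.1
  · exact Or.inr h.2

lemma DE.exists_partition {Z : Type*} [MetricSpace Z] [CompactSpace Z]
    [MeasurableSpace Z] [BorelSpace Z] (μ : Measure Z) [IsFiniteMeasure μ]
    {ε : ℝ} (hε : 0 < ε) :
    ∃ (M : ℕ) (B : Fin M → Set Z), (∀ i, MeasurableSet (B i)) ∧
      (Pairwise (Function.onFun Disjoint B)) ∧ (⋃ i, B i) = univ ∧
      (∀ i, diam (B i) < ε) ∧ (∀ i, μ (frontier (B i)) = 0) := by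
  -- choose good radii
  have Hr : ∀ z : Z, ∃ r ∈ Set.Ioo (ε/8) (ε/4), μ (frontier (ball z r)) = 0 := by
    intro z
    obtain ⟨r, hr, hnull⟩ := exists_null_frontier_thickening μ {z} (by linarith : ε/8 < ε/4)
    exact ⟨r, hr, by rwa [Metric.thickening_singleton] at hnull⟩
  choose r hr hrnull using Hr
  -- finite subcover
  obtain ⟨t, ht⟩ := isCompact_univ.elim_finite_subcover (fun z : Z => ball z (r z))
    (fun z => isOpen_ball) (fun x _ => Set.mem_iUnion.2 ⟨x, mem_ball_self (by linarith [(hr x).1])⟩)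
  set n := t.card with hn
  set e := t.equivFin with he
  set balls : ℕ → Set Z := fun m => if h : m < n then ball ((e.symm ⟨m, h⟩ : t) : Z)
      (r ((e.symm ⟨m, h⟩ : t) : Z)) else ∅ with hballs
  have hballs_mble : ∀ m, MeasurableSet (balls m) := by
    intro m; rw [hballs]; dsimp only; split <;> simp [measurableSet_ball]
  have hballs_null : ∀ m, μ (frontier (balls m)) = 0 := by
    intro m; rw [hballs]; dsimp only; split
    · exact hrnull _
    · simp
  have hballs_diam : ∀ m, diam (balls m) < ε := by
    intro m; rw [hballs]; dsimp only; split
    · calc diam (ball _ _) ≤ 2 * r _ := diam_ball (by linarith [(hr ((e.symm ⟨m, by assumption⟩ : t) : Z)).1])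
      _ < ε := by linarith [(hr ((e.symm ⟨m, by assumption⟩ : t) : Z)).2]
    · simpa using hε
  have hcover : univ ⊆ ⋃ m, ⋃ (_ : m < n), balls m := by
    intro x hx
    obtain ⟨z, hz, hxz⟩ := by
      have := ht hx
      simpa only [Set.mem_iUnion] using this
    refine Set.mem_iUnion.2 ⟨(e ⟨z, hz⟩ : Fin n).val, Set.mem_iUnion.2 ⟨(e ⟨z, hz⟩).isLt, ?_⟩⟩
    rw [hballs]; dsimp only
    rw [dif_pos (e ⟨z, hz⟩).isLt]
    have : (⟨(e ⟨z, hz⟩ : Fin n).val, (e ⟨z, hz⟩).isLt⟩ : Fin n) = e ⟨z, hz⟩ := by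
      ext; rfl
    rw [this, Equiv.symm_apply_apply]
    exact hxz
  -- disjointify
  set D : ℕ → Set Z := fun m => balls m \ ⋃ (j : ℕ) (_ : j < m), balls j with hD
  have hDm : ∀ m, MeasurableSet (D m) := by
    intro m
    exact (hballs_mble m).diff (MeasurableSet.iUnion fun j =>
      MeasurableSet.iUnion fun _ => hballs_mble j)
  have hDdisj : ∀ {i j : ℕ}, i < j → Disjoint (D i) (D j) := by
    intro i j hij
    refine Set.disjoint_left.2 fun x hxi hxj => ?_
    exact hxj.2 (Set.mem_iUnion.2 ⟨i, Set.mem_iUnion.2 ⟨hij, hxi.1⟩⟩)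
  have hDunion : ∀ x, x ∈ univ → ∃ m < n, x ∈ D m := by
    intro x hx
    have hex : ∃ m, x ∈ balls m := by
      obtain ⟨m, hm⟩ := Set.mem_iUnion.1 (hcover hx)
      obtain ⟨hmn, hxm⟩ := Set.mem_iUnion.1 hm
      exact ⟨m, hxm⟩
    have m₀lt := fun (j) (hj : j < Nat.find hex) => Nat.find_min hex hj
    set m₀ := Nat.find hex with hm₀def
    have hm₀ : x ∈ balls m₀ := Nat.find_spec hex
    have hm₀n : m₀ < n := by
      by_contra hcon
      have : balls m₀ = ∅ := by rw [hballs]; dsimp only; rw [dif_neg hcon]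
      rw [this] at hm₀; exact hm₀
    refine ⟨m₀, hm₀n, hm₀, ?_⟩
    intro hmem
    obtain ⟨j, hj⟩ := Set.mem_iUnion.1 hmem
    obtain ⟨hjm, hxj⟩ := Set.mem_iUnion.1 hj
    exact m₀lt j hjm hxj
  have hDnull : ∀ m, μ (frontier (D m)) = 0 := by
    intro m
    have h1 : frontier (D m) ⊆ frontier (balls m) ∪
        frontier (⋃ (j : ℕ) (_ : j < m), balls j) := by
      rw [hD]; dsimp only
      rw [Set.diff_eq]
      refine (frontier_inter_subset _ _).trans ?_
      intro x hx
      rcases hx with h | h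
      · exact Or.inl h.1
      · right; rw [← frontier_compl]; exact h.2
    have h2 : ∀ m, μ (frontier (⋃ (j : ℕ) (_ : j < m), balls j)) = 0 := by
      intro m
      induction m with
      | zero => simp
      | succ k ih =>
        have : (⋃ (j : ℕ) (_ : j < k + 1), balls j)
            = (⋃ (j : ℕ) (_ : j < k), balls j) ∪ balls k := by
          ext x
          simp only [Set.mem_iUnion, Set.mem_union]
          constructor
          · rintro ⟨j, hj, hx⟩
            rcases Nat.lt_succ_iff_lt_or_eq.1 hj with h | rfl
            · exact Or.inl ⟨j, h, hx⟩
            · exact Or.inr hx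
          · rintro (⟨j, hj, hx⟩ | hx)
            · exact ⟨j, Nat.lt_succ_of_lt hj, hx⟩
            · exact ⟨k, Nat.lt_succ_self k, hx⟩
        rw [this]
        refine measure_mono_null (DE.frontier_union_subset' _ _) ?_
        exact measure_union_null ih (hballs_null k)
    refine measure_mono_null h1 (measure_union_null (hballs_null m) (h2 m))
  refine ⟨n, fun i => D i, fun i => hDm i, ?_, ?_, ?_, ?_⟩
  · intro i j hij
    rcases lt_or_gt_of_ne (fun h => hij (Fin.ext h)) with h | h
    · exact hDdisj h
    · exact (hDdisj h).symm
  · apply Set.eq_univ_of_forall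
    intro x
    obtain ⟨m, hmn, hxm⟩ := hDunion x (Set.mem_univ x)
    exact Set.mem_iUnion.2 ⟨⟨m, hmn⟩, hxm⟩
  · intro i
    have hsub : D i ⊆ balls i := Set.diff_subset
    have hbd : Bornology.IsBounded (balls (i : ℕ)) := by
      rw [hballs]; dsimp only; split
      · exact isBounded_ball
      · exact Bornology.isBounded_empty
    exact lt_of_le_of_lt (diam_mono hsub hbd) (hballs_diam i)
  · intro i; exact hDnull i


section Aux

variable {X Y : Type*} [MetricSpace X] [CompactSpace X]
  [MeasurableSpace X] [BorelSpace X]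
  [MetricSpace Y] [CompactSpace Y]
  [MeasurableSpace Y] [BorelSpace Y]

lemma DE.unif_open (f : X → Y) (hf : Continuous f) (hopen : IsOpenMap f)
    {ε : ℝ} (hε : 0 < ε) :
    ∃ δ > 0, ∀ x y, dist (f x) y < δ → ∃ x', f x' = y ∧ dist x x' < ε := by
  by_contra hcon
  push_neg at hcon
  have H : ∀ n : ℕ, ∃ x y, dist (f x) y < 1 / (n + 1) ∧
      ∀ x', f x' = y → ε ≤ dist x x' := by
    intro n
    obtain ⟨x, y, hd, hx'⟩ := hcon (1 / (n + 1)) (by positivity)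
    exact ⟨x, y, hd, fun x' h1 => hx' x' h1⟩
  choose x y hd hbad using H
  obtain ⟨a, -, φ, hφ, hlim⟩ := isCompact_univ.tendsto_subseq (x := x) (fun n => mem_univ _)
  have hy : Tendsto (fun n => y (φ n)) atTop (𝓝 (f a)) := by
    have h1 : Tendsto (fun n => f (x (φ n))) atTop (𝓝 (f a)) :=
      (hf.tendsto a).comp hlim
    have h2 : Tendsto (fun n => dist (f (x (φ n))) (y (φ n))) atTop (𝓝 0) := by
      apply squeeze_zero (fun n => dist_nonneg) (fun n => (hd (φ n)).le)
      have : Tendsto (fun n : ℕ => 1 / ((n : ℝ) + 1)) atTop (𝓝 0) :=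
        tendsto_one_div_add_atTop_nhds_zero_nat
      exact this.comp (hφ.tendsto_atTop)
    exact tendsto_of_tendsto_of_dist h1 h2
  have hV : IsOpen (f '' ball a (ε / 2)) := hopen _ isOpen_ball
  have hfa : f a ∈ f '' ball a (ε / 2) :=
    ⟨a, mem_ball_self (by linarith), rfl⟩
  have hev1 : ∀ᶠ n in atTop, y (φ n) ∈ f '' ball a (ε / 2) :=
    hy (hV.mem_nhds hfa)
  have hev2 : ∀ᶠ n in atTop, dist (x (φ n)) a < ε / 2 :=
    hlim (Metric.ball_mem_nhds a (by linarith))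
  obtain ⟨n, ⟨x', hx'ball, hx'⟩, h2⟩ := (hev1.and hev2).exists
  refine absurd ?_ (not_lt.2 (hbad (φ n) x' hx'))
  exact (by
    calc dist (x (φ n)) x' ≤ dist (x (φ n)) a + dist a x' := dist_triangle _ _ _
    _ < ε / 2 + ε / 2 := by
        refine add_lt_add h2 ?_
        rw [dist_comm]; exact mem_ball.1 hx'ball
    _ = ε := by ring)

/-- A function with countable range and measurable fibers is measurable. -/
lemma DE.measurable_of_countable_range {q : Y → X} (h1 : (Set.range q).Countable)
    (h2 : ∀ v, MeasurableSet (q ⁻¹' {v})) : Measurable q := by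
  intro A hA
  have : q ⁻¹' A = ⋃ v ∈ (Set.range q ∩ A), q ⁻¹' {v} := by
    ext y
    simp only [Set.mem_preimage, Set.mem_iUnion, Set.mem_inter_iff, Set.mem_range,
      Set.mem_singleton_iff]
    exact ⟨fun h => ⟨q y, ⟨⟨y, rfl⟩, h⟩, rfl⟩, fun ⟨v, ⟨_, hv⟩, hqv⟩ => hqv ▸ hv⟩
  rw [this]
  exact MeasurableSet.biUnion (h1.mono Set.inter_subset_left) fun v _ => h2 v

/-- Composing a countable-range measurable map with an arbitrary function of a
measurable ℕ-valued index is measurable. -/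
lemma DE.measurable_pick {g : Y → ℕ} (hg : Measurable g) {s : Y → X}
    (hs : Measurable s) (hcnt : (Set.range s).Countable) (p : ℕ → X → X) :
    Measurable (fun y => p (g y) (s y)) ∧ (Set.range fun y => p (g y) (s y)).Countable := by
  have hrange : (Set.range fun y => p (g y) (s y)).Countable := by
    have : (Set.range fun y => p (g y) (s y)) ⊆
        (fun kx : ℕ × X => p kx.1 kx.2) '' (Set.univ ×ˢ Set.range s) := by
      rintro v ⟨y, rfl⟩
      exact ⟨(g y, s y), ⟨Set.mem_univ _, ⟨y, rfl⟩⟩, rfl⟩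
    exact ((Set.countable_univ_iff.2 inferInstance).prod hcnt).image _ |>.mono this
  refine ⟨DE.measurable_of_countable_range hrange fun v => ?_, hrange⟩
  have : (fun y => p (g y) (s y)) ⁻¹' {v} =
      ⋃ (kx : ℕ × X) (_ : kx ∈ {q : ℕ × X | q.2 ∈ Set.range s ∧ p q.1 q.2 = v}),
        (g ⁻¹' {kx.1} ∩ s ⁻¹' {kx.2}) := by
    ext y
    simp only [Set.mem_preimage, Set.mem_singleton_iff, Set.mem_iUnion, Set.mem_inter_iff,
      Set.mem_setOf_eq]
    constructor
    · intro h
      exact ⟨(g y, s y), ⟨⟨y, rfl⟩, h⟩, rfl, rfl⟩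
    · rintro ⟨⟨k, x⟩, ⟨-, hpv⟩, hk, hx⟩
      simp only at hk hx
      rw [hk, hx, hpv]
  rw [this]
  refine MeasurableSet.biUnion ?_ fun kx _ =>
    (hg (measurableSet_singleton _)).inter (hs (measurableSet_singleton _))
  exact ((Set.countable_univ_iff.2 inferInstance).prod hcnt).mono
    (fun q hq => Set.mem_prod.2 ⟨Set.mem_univ _, hq.1⟩)

lemma DE.exists_section [Nonempty X] (f : X → Y) (hf : Continuous f)
    (hopen : IsOpenMap f) (hsurj : Function.Surjective f)
    {η : ℝ} (hη : 0 < η) (K : Set X) :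
    ∃ s : Y → X, Measurable s ∧ (∀ y, f (s y) = y) ∧
      ∀ y ∈ f '' K, s y ∈ Metric.thickening η K := by
  have : Nonempty Y := ⟨f (Classical.arbitrary X)⟩
  -- the geometric scales
  set c : ℕ → ℝ := fun n => η / 8 * (1/2)^n with hc
  have hcpos : ∀ n, 0 < c n := fun n => by positivity
  -- uniform openness constants
  have hδ : ∀ n : ℕ, ∃ δ > 0, ∀ x y, dist (f x) y < δ →
      ∃ x', f x' = y ∧ dist x x' < c n := fun n => DE.unif_open f hf hopen (hcpos n)
  choose δ' hδpos hδspec using hδ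
  -- partition scales
  set θ : ℕ → ℝ := fun n => min (c n) (min (δ' n / 3) (δ' (n+1) / 3)) with hθ
  have hθpos : ∀ n, 0 < θ n := fun n =>
    lt_min (hcpos n) (lt_min (by linarith [hδpos n]) (by linarith [hδpos (n+1)]))
  have hθc : ∀ n, θ n ≤ c n := fun n => min_le_left _ _
  have hθsum : ∀ n, θ n + θ (n+1) < δ' (n+1) := by
    intro n
    have h1 : θ n ≤ δ' (n+1) / 3 := (min_le_right _ _).trans (min_le_right _ _)
    have h2 : θ (n+1) ≤ δ' (n+1) / 3 := (min_le_right _ _).trans (min_le_left _ _)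
    linarith [hδpos (n+1)]
  -- partitions of Y at each scale
  have hpart : ∀ n : ℕ, ∃ (As : ℕ → Set Y), (∀ k, MeasurableSet (As k)) ∧
      (∀ k, Bornology.IsBounded (As k)) ∧ (∀ k, diam (As k) ≤ θ n) ∧
      (⋃ k, As k = univ) ∧ (Pairwise fun k m => Disjoint (As k) (As m)) :=
    fun n => SeparableSpace.exists_measurable_partition_diam_le Y (hθpos n)
  choose As hAs_mble hAs_bdd hAs_diam hAs_union hAs_disj using hpart
  -- index maps
  have hex : ∀ n y, ∃ k, y ∈ As n k := by
    intro n y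
    have := (hAs_union n).symm ▸ Set.mem_univ y
    simpa only [Set.mem_iUnion] using this
  set I : ℕ → Y → ℕ := fun n y => Nat.find (hex n y) with hI
  have hImem : ∀ n y, y ∈ As n (I n y) := fun n y => Nat.find_spec (hex n y)
  have hIpre : ∀ n m, (I n) ⁻¹' {m} = As n m := by
    intro n m
    ext y
    simp only [Set.mem_preimage, Set.mem_singleton_iff]
    constructor
    · rintro rfl; exact hImem n y
    · intro hy
      by_contra hne
      exact Set.disjoint_left.1 (hAs_disj n (Ne.symm hne)) hy (hImem n y)
  have hImble : ∀ n, Measurable (I n) := by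
    intro n
    apply measurable_to_countable
    intro y
    rw [hIpre]
    exact hAs_mble n _
  -- representative points
  set yrep : ℕ → ℕ → Y := fun n k =>
    if h : (As n k ∩ f '' K).Nonempty then h.choose
    else if h' : (As n k).Nonempty then h'.choose else Classical.arbitrary Y with hyrep
  have hyrep_mem : ∀ n k, (As n k).Nonempty → yrep n k ∈ As n k := by
    intro n k hne
    rw [hyrep]; dsimp only
    split
    · next h => exact h.choose_spec.1
    · next h => exact hne.choose_spec
  have hyrep_K : ∀ n k, (As n k ∩ f '' K).Nonempty → yrep n k ∈ f '' K := by
    intro n k h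
    rw [hyrep]; dsimp only
    rw [dif_pos h]
    exact h.choose_spec.2
  have hdist_yrep : ∀ n y, dist y (yrep n (I n y)) ≤ θ n := fun n y =>
    (dist_le_diam_of_mem (hAs_bdd n _) (hImem n y)
      (hyrep_mem n _ ⟨y, hImem n y⟩)).trans (hAs_diam n _)
  -- the levels
  set Good : ℕ → (Y → X) → Prop := fun n s =>
    Measurable s ∧ (Set.range s).Countable ∧ ∀ y, f (s y) = yrep n (I n y) with hGood
  -- base map
  set x0 : ℕ → X := fun k =>
    if h : yrep 0 k ∈ f '' K then h.choose else (hsurj (yrep 0 k)).choose with hx0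
  have hx0f : ∀ k, f (x0 k) = yrep 0 k := by
    intro k
    rw [hx0]; dsimp only
    split
    · next h => exact h.choose_spec.2
    · exact (hsurj _).choose_spec
  have hx0K : ∀ k, yrep 0 k ∈ f '' K → x0 k ∈ K := by
    intro k h
    rw [hx0]; dsimp only
    rw [dif_pos h]
    exact h.choose_spec.1
  have hs0good : Good 0 (fun y => x0 (I 0 y)) := by
    refine ⟨?_, ?_, fun y => hx0f _⟩
    · exact (DE.measurable_pick (hImble 0)
        (measurable_const (a := Classical.arbitrary X))
        ((Set.countable_singleton (Classical.arbitrary X)).mono Set.range_const_subset)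
        (fun k _ => x0 k)).1
    · exact ((Set.countable_univ_iff.2 inferInstance).image x0).mono
        (by rintro v ⟨y, rfl⟩; exact ⟨I 0 y, Set.mem_univ _, rfl⟩)
  -- recursion step
  have hstep : ∀ n (s : Y → X), Good n s → ∃ s' : Y → X, Good (n+1) s' ∧
      ∀ y, dist (s y) (s' y) ≤ η / 8 * (1/2)^n := by
    intro n s hs
    set p : ℕ → X → X := fun k x =>
      if h : dist (f x) (yrep (n+1) k) < δ' (n+1) then
        (hδspec (n+1) x (yrep (n+1) k) h).choose else x with hp
    have hcond : ∀ y, dist (f (s y)) (yrep (n+1) (I (n+1) y)) < δ' (n+1) := by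
      intro y
      calc dist (f (s y)) (yrep (n+1) (I (n+1) y))
          ≤ dist (f (s y)) y + dist y (yrep (n+1) (I (n+1) y)) := dist_triangle _ _ _
        _ ≤ θ n + θ (n+1) := by
            refine add_le_add ?_ (hdist_yrep (n+1) y)
            rw [hs.2.2 y, dist_comm]
            exact hdist_yrep n y
        _ < δ' (n+1) := hθsum n
    obtain ⟨hmble, hcnt⟩ := DE.measurable_pick (hImble (n+1)) hs.1 hs.2.1 p
    refine ⟨fun y => p (I (n+1) y) (s y), ⟨hmble, hcnt, ?_⟩, ?_⟩
    · intro y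
      rw [hp]; dsimp only
      rw [dif_pos (hcond y)]
      exact (hδspec (n+1) (s y) _ (hcond y)).choose_spec.1
    · intro y
      have heq : p (I (n+1) y) (s y) =
          (hδspec (n+1) (s y) (yrep (n+1) (I (n+1) y)) (hcond y)).choose := by
        rw [hp]; dsimp only; rw [dif_pos (hcond y)]
      show dist (s y) (p (I (n+1) y) (s y)) ≤ _
      rw [heq]
      have hlt := (hδspec (n+1) (s y) _ (hcond y)).choose_spec.2
      refine hlt.le.trans ?_
      have hceq : c (n+1) = η / 8 * (1/2)^(n+1) := rfl
      rw [hceq]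
      have hpow : ((1:ℝ)/2)^(n+1) ≤ (1/2)^n :=
        pow_le_pow_of_le_one (by norm_num) (by norm_num) (Nat.le_succ n)
      nlinarith [hη]
  -- build the chain
  set G : ℕ → Type _ := fun n => {s : Y → X // Good n s} with hG
  set stepF : ∀ n, G n → G (n+1) := fun n p =>
    ⟨(hstep n p.1 p.2).choose, (hstep n p.1 p.2).choose_spec.1⟩ with hstepF
  set chain : ∀ n, G n := fun n => Nat.rec ⟨fun y => x0 (I 0 y), hs0good⟩ stepF n with hchain
  have hlink : ∀ n y, dist ((chain n).1 y) ((chain (n+1)).1 y) ≤ η / 8 * (1/2)^n :=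
    fun n => (hstep n (chain n).1 (chain n).2).choose_spec.2
  -- pointwise limits
  have hcauchy : ∀ y, ∃ a : X, Tendsto (fun n => (chain n).1 y) atTop (𝓝 a) := by
    intro y
    apply cauchySeq_tendsto_of_complete
    exact cauchySeq_of_le_geometric (1/2) (η/8) (by norm_num) (fun n => hlink n y)
  choose s hs using hcauchy
  have hs0dist : ∀ y, dist ((chain 0).1 y) (s y) ≤ η / 4 := by
    intro y
    have := dist_le_of_le_geometric_of_tendsto₀ (1/2) (η/8) (by norm_num)
      (fun n => hlink n y) (hs y)
    calc dist ((chain 0).1 y) (s y) ≤ η/8 / (1 - 1/2) := this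
      _ = η / 4 := by ring
  refine ⟨s, ?_, ?_, ?_⟩
  · exact measurable_of_tendsto_metrizable (fun n => (chain n).2.1) (tendsto_pi_nhds.2 hs)
  · intro y
    have h1 : Tendsto (fun n => f ((chain n).1 y)) atTop (𝓝 (f (s y))) :=
      ((hf.tendsto _).comp (hs y))
    have h2 : Tendsto (fun n => f ((chain n).1 y)) atTop (𝓝 y) := by
      rw [tendsto_iff_dist_tendsto_zero]
      have hb : ∀ n, dist (f ((chain n).1 y)) y ≤ c n := by
        intro n
        rw [(chain n).2.2.2 y, dist_comm]
        exact (hdist_yrep n y).trans (hθc n)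
      have hc0 : Tendsto c atTop (𝓝 0) := by
        rw [hc]
        have : Tendsto (fun n : ℕ => ((1:ℝ)/2)^n) atTop (𝓝 0) :=
          tendsto_pow_atTop_nhds_zero_of_lt_one (by norm_num) (by norm_num)
        simpa using this.const_mul (η / 8)
      exact squeeze_zero (fun n => dist_nonneg) hb hc0
    exact tendsto_nhds_unique h1 h2
  · rintro y ⟨xk, hxk, rfl⟩
    have hy0 : (chain 0).1 (f xk) ∈ K := by
      show x0 (I 0 (f xk)) ∈ K
      apply hx0K
      apply hyrep_K
      exact ⟨f xk, hImem 0 (f xk), ⟨xk, hxk, rfl⟩⟩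
    rw [Metric.mem_thickening_iff]
    exact ⟨(chain 0).1 (f xk), hy0, by
      rw [dist_comm]
      calc dist ((chain 0).1 (f xk)) (s (f xk)) ≤ η / 4 := hs0dist _
        _ < η := by linarith⟩

lemma DE.key [Nonempty X] (f : X → Y) (hf : Continuous f) (hopen : IsOpenMap f)
    (hsurj : Function.Surjective f) (μ : ProbabilityMeasure X) {r : ℝ} (hr : 0 < r) :
    ∃ V ∈ 𝓝 (μ.map hf.measurable.aemeasurable), ∀ ν ∈ V,
      ∃ μ' : ProbabilityMeasure X, μ'.map hf.measurable.aemeasurable = ν ∧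
        levyProkhorovEDist (μ' : Measure X) (μ : Measure X) < ENNReal.ofReal r := by
  have hfm : Measurable f := hf.measurable
  have hXbdd : ∀ s : Set X, Bornology.IsBounded s :=
    fun s => isCompact_univ.isBounded.subset (subset_univ _)
  have hYbdd : ∀ s : Set Y, Bornology.IsBounded s :=
    fun s => isCompact_univ.isBounded.subset (subset_univ _)
  set μY : ProbabilityMeasure Y := μ.map hf.measurable.aemeasurable with hμYdef
  have hμYm : (μY : Measure Y) = ((μ : Measure X)).map f := μ.toMeasure_map _
  set ε : ℝ := r / 8 with hεdef
  have hε : 0 < ε := by positivity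
  obtain ⟨δ, hδpos, hδ⟩ := DE.unif_open f hf hopen hε
  obtain ⟨M, B, hBmble, hBdisj, hBunion, hBdiam, hBnull⟩ :=
    DE.exists_partition (μY : Measure Y) hδpos
  obtain ⟨N, A, hAmble, hAdisj, hAunion, hAdiam, -⟩ :=
    DE.exists_partition (μ : Measure X) hε
  set θ : ℝ := r / (8 * (M + 1)) with hθdef
  have hθ : 0 < θ := by positivity
  -- the neighborhood V
  set V : Set (ProbabilityMeasure Y) :=
    ⋂ i : Fin M, {ν : ProbabilityMeasure Y | |((ν (B i) : ℝ)) - ((μY (B i) : ℝ))| < θ}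
    with hVdef
  have hVnhds : V ∈ 𝓝 μY := by
    rw [hVdef]
    refine Filter.iInter_mem.2 fun i => ?_
    have hnull : μY (frontier (B i)) = 0 := by
      have h0 := hBnull i
      simp only [← ProbabilityMeasure.ennreal_coeFn_eq_coeFn_toMeasure] at h0
      exact_mod_cast h0
    have ht : Tendsto (fun ν : ProbabilityMeasure Y => ((ν (B i) : ℝ)))
        (𝓝 μY) (𝓝 ((μY (B i) : ℝ))) :=
      NNReal.tendsto_coe.2
        (ProbabilityMeasure.tendsto_measure_of_null_frontier_of_tendsto tendsto_id hnull)
    have hset : {ν : ProbabilityMeasure Y | |((ν (B i) : ℝ)) - ((μY (B i) : ℝ))| < θ} =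
        (fun ν : ProbabilityMeasure Y => ((ν (B i) : ℝ))) ⁻¹'
          (Metric.ball ((μY (B i) : ℝ)) θ) := by
      ext ν; simp [Real.dist_eq]
    rw [hset]
    exact ht (Metric.ball_mem_nhds _ hθ)
  refine ⟨V, hVnhds, ?_⟩
  intro ν hν
  -- basic mass comparisons
  set θ' : ℝ≥0∞ := ENNReal.ofReal θ with hθ'def
  set mi : Fin M → ℝ≥0∞ := fun i => (μ : Measure X) (f ⁻¹' B i) with hmidef
  set ni : Fin M → ℝ≥0∞ := fun i => (ν : Measure Y) (B i) with hnidef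
  have hmiY : ∀ i, mi i = (μY : Measure Y) (B i) := fun i => by
    rw [hmidef]; dsimp only
    rw [hμYm, Measure.map_apply hfm (hBmble i)]
  have hcomp : ∀ i, ni i ≤ mi i + θ' ∧ mi i ≤ ni i + θ' := by
    intro i
    have hmem := hν
    rw [hVdef] at hmem
    have h1 : |((ν (B i) : ℝ)) - ((μY (B i) : ℝ))| < θ := by
      have := Set.mem_iInter.1 hmem i
      exact this
    have hνr : ni i = ENNReal.ofReal ((ν (B i) : ℝ)) := by
      rw [hnidef]; dsimp only
      rw [← ProbabilityMeasure.ennreal_coeFn_eq_coeFn_toMeasure,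
        ENNReal.ofReal_coe_nnreal]
    have hμr : mi i = ENNReal.ofReal ((μY (B i) : ℝ)) := by
      rw [hmiY i, ← ProbabilityMeasure.ennreal_coeFn_eq_coeFn_toMeasure,
        ENNReal.ofReal_coe_nnreal]
    rw [hνr, hμr, hθ'def]
    constructor
    · rw [← ENNReal.ofReal_add (by positivity) hθ.le]
      exact ENNReal.ofReal_le_ofReal (by cases abs_lt.1 h1; linarith)
    · rw [← ENNReal.ofReal_add (by positivity) hθ.le]
      exact ENNReal.ofReal_le_ofReal (by cases abs_lt.1 h1; linarith)
  -- sections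
  obtain ⟨s₀, hs₀m, hs₀f, -⟩ := DE.exists_section f hf hopen hsurj hε Set.univ
  set P : Fin M → Fin N → Set X := fun i j => A j ∩ f ⁻¹' B i with hPdef
  have hPm : ∀ i j, MeasurableSet (P i j) := fun i j => (hAmble j).inter (hfm (hBmble i))
  set cij : Fin M → Fin N → ℝ≥0∞ := fun i j => (μ : Measure X) (P i j) with hcijdef
  set xpt : Fin M → Fin N → X := fun i j =>
    if h : (P i j).Nonempty then h.choose else Classical.arbitrary X with hxptdef
  have hxpt : ∀ i j, cij i j ≠ 0 → xpt i j ∈ P i j := by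
    intro i j hc
    have hne : (P i j).Nonempty := nonempty_of_measure_ne_zero hc
    rw [hxptdef]; dsimp only; rw [dif_pos hne]; exact hne.choose_spec
  have hsec : ∀ i j, ∃ s : Y → X, Measurable s ∧ (∀ y, f (s y) = y) ∧
      (cij i j ≠ 0 → ∀ y ∈ B i, s y ∈ ball (xpt i j) (2*ε)) := by
    intro i j
    obtain ⟨s, hm, hid, hloc⟩ :=
      DE.exists_section f hf hopen hsurj hε (closedBall (xpt i j) ε)
    refine ⟨s, hm, hid, fun hc y hy => ?_⟩
    have hx := hxpt i j hc
    have hyim : y ∈ f '' closedBall (xpt i j) ε := by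
      have hdist : dist (f (xpt i j)) y < δ :=
        lt_of_le_of_lt (dist_le_diam_of_mem (hYbdd _) hx.2 hy) (hBdiam i)
      obtain ⟨x', hx'y, hx'd⟩ := hδ _ _ hdist
      exact ⟨x', by rw [mem_closedBall, dist_comm]; exact hx'd.le, hx'y⟩
    have hth := hloc y hyim
    rw [mem_thickening_iff] at hth
    obtain ⟨z, hz, hdz⟩ := hth
    rw [mem_ball]
    calc dist (s y) (xpt i j) ≤ dist (s y) z + dist z (xpt i j) := dist_triangle _ _ _
      _ < ε + ε := add_lt_add_of_lt_of_le hdz (mem_closedBall.1 hz)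
      _ = 2 * ε := by ring
  choose sec hsecm hsecf hsecloc using hsec
  -- the lifted measure
  set w : Fin M → Fin N → ℝ≥0∞ := fun i j => cij i j * (mi i)⁻¹ with hwdef
  set ρ : Fin M → Fin N → Measure X :=
    fun i j => ((ν : Measure Y).restrict (B i)).map (sec i j) with hρdef
  set T : Fin M → Measure X := fun i =>
    if mi i = 0 then ((ν : Measure Y).restrict (B i)).map s₀
    else ∑ j : Fin N, w i j • ρ i j with hTdef
  set μ'm : Measure X := ∑ i : Fin M, T i with hμ'def
  have hmi_ne_top : ∀ i, mi i ≠ ∞ := fun i => measure_ne_top _ _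
  have hcij_le : ∀ i j, cij i j ≤ mi i := fun i j =>
    measure_mono inter_subset_right
  have hw0 : ∀ i j, mi i = 0 → w i j = 0 := by
    intro i j h
    have : cij i j = 0 := le_antisymm (h ▸ hcij_le i j) zero_le
    rw [hwdef]; dsimp only; rw [this, zero_mul]
  have hsum_cij : ∀ i, ∑ j : Fin N, cij i j = mi i := by
    intro i
    have hU : f ⁻¹' B i = ⋃ j, P i j := by
      rw [hPdef]; dsimp only
      rw [← Set.iUnion_inter, hAunion, Set.univ_inter]
    have hdisj : Pairwise (Function.onFun Disjoint fun j => P i j) := fun j k hjk =>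
      Disjoint.mono inter_subset_left inter_subset_left (hAdisj hjk)
    rw [hmidef]; dsimp only
    rw [hU, measure_iUnion hdisj (fun j => hPm i j), tsum_fintype]
  have hsumw : ∀ i, mi i ≠ 0 → ∑ j : Fin N, w i j = 1 := by
    intro i h
    rw [hwdef]; dsimp only
    rw [← Finset.sum_mul, hsum_cij i, ENNReal.mul_inv_cancel h (hmi_ne_top i)]
  have hwm : ∀ i j, mi i ≠ 0 → w i j * mi i = cij i j := by
    intro i j h
    rw [hwdef]; dsimp only
    rw [mul_assoc, ENNReal.inv_mul_cancel h (hmi_ne_top i), mul_one]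
  have hρ_apply : ∀ i j (E : Set X), MeasurableSet E →
      ρ i j E = (ν : Measure Y) (sec i j ⁻¹' E ∩ B i) := by
    intro i j E hE
    rw [hρdef]; dsimp only
    rw [Measure.map_apply (hsecm i j) hE, Measure.restrict_apply (hsecm i j hE)]
  have hρ_le : ∀ i j (E : Set X), MeasurableSet E → ρ i j E ≤ ni i := by
    intro i j E hE
    rw [hρ_apply i j E hE, hnidef]
    exact measure_mono inter_subset_right
  -- pushforward identity
  have hrestr : ∀ (s : Y → X), Measurable s → (∀ y, f (s y) = y) →
      ∀ (E : Set Y), MeasurableSet E → ∀ i,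
      (((ν : Measure Y).restrict (B i)).map s) (f ⁻¹' E) = (ν : Measure Y) (E ∩ B i) := by
    intro s hsm hsf E hE i
    rw [Measure.map_apply hsm (hfm hE), Measure.restrict_apply (hsm (hfm hE))]
    congr 1
    ext y
    simp [Set.mem_preimage, hsf y]
  have hmap : μ'm.map f = (ν : Measure Y) := by
    ext E hE
    rw [Measure.map_apply hfm hE, hμ'def, Measure.finset_sum_apply]
    have hTi : ∀ i, T i (f ⁻¹' E) = (ν : Measure Y) (E ∩ B i) := by
      intro i
      rw [hTdef]; dsimp only
      by_cases h : mi i = 0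
      · rw [if_pos h]
        exact hrestr s₀ hs₀m hs₀f E hE i
      · rw [if_neg h, Measure.finset_sum_apply]
        have : ∀ j, (w i j • ρ i j) (f ⁻¹' E) = w i j * (ν : Measure Y) (E ∩ B i) := by
          intro j
          rw [Measure.smul_apply, smul_eq_mul, hρdef]
          dsimp only
          rw [hrestr (sec i j) (hsecm i j) (hsecf i j) E hE i]
        rw [Finset.sum_congr rfl fun j _ => this j, ← Finset.sum_mul, hsumw i h, one_mul]
    rw [Finset.sum_congr rfl fun i _ => hTi i]
    have hUE : ⋃ i, (E ∩ B i) = E := by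
      rw [← Set.inter_iUnion, hBunion, Set.inter_univ]
    have hdisj : Pairwise (Function.onFun Disjoint fun i => E ∩ B i) := fun i k hik =>
      Disjoint.mono inter_subset_right inter_subset_right (hBdisj hik)
    rw [← tsum_fintype (L := SummationFilter.unconditional _), ← measure_iUnion hdisj (fun i => hE.inter (hBmble i)), hUE]
  have hprob : IsProbabilityMeasure μ'm := by
    constructor
    have h1 : μ'm Set.univ = (μ'm.map f) Set.univ := by
      rw [Measure.map_apply hfm MeasurableSet.univ, Set.preimage_univ]
    rw [h1, hmap]
    exact measure_univ
  -- the two LP estimates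
  set Θ : ℝ≥0∞ := (M : ℝ≥0∞) * θ' with hΘdef
  have hwle1 : ∀ i, (∑ j : Fin N, w i j) ≤ 1 := by
    intro i
    by_cases h : mi i = 0
    · have : ∀ j, w i j = 0 := fun j => hw0 i j h
      rw [Finset.sum_congr rfl fun j _ => this j]
      simp
    · rw [hsumw i h]
  have hest1 : ∀ (E : Set X), MeasurableSet E →
      μ'm E ≤ (μ : Measure X) (thickening (3*ε) E) + Θ := by
    intro E hE
    set marked : Fin M → Finset (Fin N) := fun i =>
      Finset.univ.filter (fun j => cij i j ≠ 0 ∧ (ball (xpt i j) (2*ε) ∩ E).Nonempty)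
      with hmarkeddef
    have hTi : ∀ i, T i E ≤ (∑ j ∈ marked i, cij i j) + θ' := by
      intro i
      rw [hTdef]; dsimp only
      by_cases h : mi i = 0
      · rw [if_pos h]
        have h2 : (((ν : Measure Y).restrict (B i)).map s₀) E ≤ ni i := by
          rw [Measure.map_apply hs₀m hE, Measure.restrict_apply (hs₀m hE), hnidef]
          exact measure_mono inter_subset_right
        calc (((ν : Measure Y).restrict (B i)).map s₀) E ≤ ni i := h2
          _ ≤ mi i + θ' := (hcomp i).1
          _ = θ' := by rw [h, zero_add]
          _ ≤ _ := le_add_self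
      · rw [if_neg h, Measure.finset_sum_apply]
        have hterm : ∀ j ∈ Finset.univ, j ∉ marked i → (w i j • ρ i j) E = 0 := by
          intro j _ hj
          rw [hmarkeddef] at hj
          simp only [Finset.mem_filter, Finset.mem_univ, true_and, not_and] at hj
          by_cases hc : cij i j = 0
          · have hww : w i j = 0 := by rw [hwdef]; dsimp only; rw [hc, zero_mul]
            rw [Measure.smul_apply, smul_eq_mul, hww, zero_mul]
          · have hempty := hj hc
            have hρ0 : ρ i j E = 0 := by
              rw [hρ_apply i j E hE]
              have hemp : sec i j ⁻¹' E ∩ B i = ∅ := by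
                ext y
                simp only [Set.mem_inter_iff, Set.mem_preimage, Set.mem_empty_iff_false,
                  iff_false, not_and]
                intro hyE hyB
                exact hempty ⟨sec i j y, hsecloc i j hc y hyB, hyE⟩
              rw [hemp, measure_empty]
            rw [Measure.smul_apply, smul_eq_mul, hρ0, mul_zero]
        rw [← Finset.sum_subset (Finset.subset_univ (marked i)) hterm]
        have hterm2 : ∀ j ∈ marked i, (w i j • ρ i j) E ≤ cij i j + w i j * θ' := by
          intro j _
          rw [Measure.smul_apply, smul_eq_mul]
          calc w i j * ρ i j E ≤ w i j * ni i := mul_le_mul_right (hρ_le i j E hE) _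
            _ ≤ w i j * (mi i + θ') := mul_le_mul_right (hcomp i).1 _
            _ = w i j * mi i + w i j * θ' := by rw [mul_add]
            _ = cij i j + w i j * θ' := by rw [hwm i j h]
        calc ∑ j ∈ marked i, (w i j • ρ i j) E
            ≤ ∑ j ∈ marked i, (cij i j + w i j * θ') := Finset.sum_le_sum hterm2
          _ = (∑ j ∈ marked i, cij i j) + ∑ j ∈ marked i, w i j * θ' :=
              Finset.sum_add_distrib
          _ ≤ (∑ j ∈ marked i, cij i j) + θ' := by
              gcongr
              calc ∑ j ∈ marked i, w i j * θ' ≤ ∑ j : Fin N, w i j * θ' :=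
                    Finset.sum_le_sum_of_subset (Finset.subset_univ _)
                _ = (∑ j : Fin N, w i j) * θ' := by rw [Finset.sum_mul]
                _ ≤ 1 * θ' := mul_le_mul_left (hwle1 i) _
                _ = θ' := one_mul _
    have hsummark : ∀ i, ∑ j ∈ marked i, cij i j ≤
        (μ : Measure X) (thickening (3*ε) E ∩ f ⁻¹' B i) := by
      intro i
      have hmono : ∀ j ∈ marked i, P i j ⊆ thickening (3*ε) E ∩ f ⁻¹' B i := by
        intro j hj
        rw [hmarkeddef] at hj
        simp only [Finset.mem_filter, Finset.mem_univ, true_and] at hj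
        obtain ⟨hc, e, he⟩ := hj
        intro z hz
        refine ⟨?_, hz.2⟩
        rw [mem_thickening_iff]
        refine ⟨e, he.2, ?_⟩
        calc dist z e ≤ dist z (xpt i j) + dist (xpt i j) e := dist_triangle _ _ _
          _ < ε + 2*ε := by
              refine add_lt_add_of_le_of_lt ?_ ?_
              · exact (dist_le_diam_of_mem (hXbdd _) hz.1 (hxpt i j hc).1).trans
                  (hAdiam j).le
              · rw [dist_comm]; exact mem_ball.1 he.1
          _ = 3*ε := by ring
      have hdisjP : (↑(marked i) : Set (Fin N)).PairwiseDisjoint (fun j => P i j) :=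
        fun a _ b _ hab => Disjoint.mono inter_subset_left inter_subset_left (hAdisj hab)
      calc ∑ j ∈ marked i, cij i j
          = (μ : Measure X) (⋃ j ∈ marked i, P i j) :=
            (measure_biUnion_finset hdisjP (fun j _ => hPm i j)).symm
        _ ≤ (μ : Measure X) (thickening (3*ε) E ∩ f ⁻¹' B i) :=
            measure_mono (Set.iUnion₂_subset hmono)
    calc μ'm E = ∑ i : Fin M, T i E := by rw [hμ'def, Measure.finset_sum_apply]
      _ ≤ ∑ i : Fin M, ((μ : Measure X) (thickening (3*ε) E ∩ f ⁻¹' B i) + θ') := by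
          refine Finset.sum_le_sum fun i _ => (hTi i).trans ?_
          gcongr
          exact hsummark i
      _ = (∑ i : Fin M, (μ : Measure X) (thickening (3*ε) E ∩ f ⁻¹' B i))
            + (M : ℝ≥0∞) * θ' := by
          rw [Finset.sum_add_distrib, Finset.sum_const, Finset.card_univ,
            Fintype.card_fin, nsmul_eq_mul]
      _ ≤ (μ : Measure X) (thickening (3*ε) E) + Θ := by
          rw [hΘdef]
          gcongr
          have hdisj : Pairwise (Function.onFun Disjoint
              fun i => thickening (3*ε) E ∩ f ⁻¹' B i) := fun i k hik =>
            Disjoint.mono inter_subset_right inter_subset_right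
              ((hBdisj hik).preimage f)
          calc ∑ i : Fin M, (μ : Measure X) (thickening (3*ε) E ∩ f ⁻¹' B i)
              = (μ : Measure X) (⋃ i, thickening (3*ε) E ∩ f ⁻¹' B i) := by
                rw [measure_iUnion hdisj
                  (fun i => isOpen_thickening.measurableSet.inter (hfm (hBmble i))),
                  tsum_fintype]
            _ ≤ (μ : Measure X) (thickening (3*ε) E) :=
                measure_mono (Set.iUnion_subset fun i => inter_subset_left)
  have hest2 : ∀ (E : Set X), MeasurableSet E →
      (μ : Measure X) E ≤ μ'm (thickening (3*ε) E) + Θ := by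
    intro E hE
    have hEthm : MeasurableSet (thickening (3*ε) E) := isOpen_thickening.measurableSet
    have hpair : ∀ i j, (μ : Measure X) (P i j ∩ E) ≤
        w i j * ρ i j (thickening (3*ε) E) + w i j * θ' := by
      intro i j
      by_cases hc : cij i j = 0
      · have hww : w i j = 0 := by rw [hwdef]; dsimp only; rw [hc, zero_mul]
        have h0 : (μ : Measure X) (P i j ∩ E) = 0 :=
          le_antisymm ((measure_mono inter_subset_left).trans_eq hc) zero_le
        rw [h0, hww, zero_mul, zero_mul, add_zero]
      · by_cases hne : (P i j ∩ E).Nonempty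
        · have hmi0 : mi i ≠ 0 := fun h => hc (le_antisymm (h ▸ hcij_le i j) zero_le)
          have hBsub : B i ⊆ sec i j ⁻¹' (thickening (3*ε) E) := by
            intro y hy
            obtain ⟨e, heP, heE⟩ := hne
            rw [Set.mem_preimage, mem_thickening_iff]
            refine ⟨e, heE, ?_⟩
            calc dist (sec i j y) e
                ≤ dist (sec i j y) (xpt i j) + dist (xpt i j) e := dist_triangle _ _ _
              _ < 2*ε + ε := add_lt_add_of_lt_of_le
                  (mem_ball.1 (hsecloc i j hc y hy))
                  ((dist_le_diam_of_mem (hXbdd _) (hxpt i j hc).1 heP.1).trans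
                    (hAdiam j).le)
              _ = 3*ε := by ring
          have hρfull : ρ i j (thickening (3*ε) E) = ni i := by
            rw [hρ_apply i j _ hEthm, hnidef]
            congr 1
            exact Set.inter_eq_right.2 hBsub
          calc (μ : Measure X) (P i j ∩ E) ≤ cij i j := measure_mono inter_subset_left
            _ = w i j * mi i := (hwm i j hmi0).symm
            _ ≤ w i j * (ni i + θ') := mul_le_mul_right (hcomp i).2 _
            _ = w i j * ni i + w i j * θ' := mul_add _ _ _
            _ = w i j * ρ i j (thickening (3*ε) E) + w i j * θ' := by rw [hρfull]
        · have hPE : P i j ∩ E = ∅ := not_nonempty_iff_eq_empty.1 hne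
          rw [hPE, measure_empty]
          exact zero_le
    have hdec : (μ : Measure X) E =
        ∑ i : Fin M, ∑ j : Fin N, (μ : Measure X) (P i j ∩ E) := by
      have h1 : (μ : Measure X) E = ∑ i : Fin M, (μ : Measure X) (E ∩ f ⁻¹' B i) := by
        have hU : ⋃ i, (E ∩ f ⁻¹' B i) = E := by
          rw [← Set.inter_iUnion, ← Set.preimage_iUnion, hBunion, Set.preimage_univ,
            Set.inter_univ]
        have hdisj : Pairwise (Function.onFun Disjoint fun i => E ∩ f ⁻¹' B i) :=
          fun i k hik => Disjoint.mono inter_subset_right inter_subset_right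
            ((hBdisj hik).preimage f)
        rw [← hU, measure_iUnion hdisj (fun i => hE.inter (hfm (hBmble i))), tsum_fintype]
        rw [hU]
      rw [h1]
      refine Finset.sum_congr rfl fun i _ => ?_
      have hU2 : E ∩ f ⁻¹' B i = ⋃ j, (P i j ∩ E) := by
        rw [hPdef]; dsimp only
        ext z
        simp only [Set.mem_inter_iff, Set.mem_iUnion, Set.mem_preimage]
        constructor
        · rintro ⟨hzE, hzB⟩
          obtain ⟨j, hj⟩ : ∃ j, z ∈ A j := by
            have hz := hAunion ▸ Set.mem_univ z
            simpa [Set.mem_iUnion] using hz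
          exact ⟨j, ⟨hj, hzB⟩, hzE⟩
        · rintro ⟨j, ⟨hjA, hjB⟩, hzE⟩
          exact ⟨hzE, hjB⟩
      have hdisj2 : Pairwise (Function.onFun Disjoint fun j => P i j ∩ E) :=
        fun a b hab => Disjoint.mono (inter_subset_left.trans inter_subset_left)
          (inter_subset_left.trans inter_subset_left) (hAdisj hab)
      rw [hU2, measure_iUnion hdisj2 (fun j => (hPm i j).inter hE), tsum_fintype]
    have hTbound : ∀ i, ∑ j : Fin N, (w i j * ρ i j (thickening (3*ε) E))
        ≤ T i (thickening (3*ε) E) := by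
      intro i
      rw [hTdef]; dsimp only
      by_cases h : mi i = 0
      · rw [if_pos h]
        have hz : ∀ j, w i j * ρ i j (thickening (3*ε) E) = 0 := fun j => by
          rw [hw0 i j h, zero_mul]
        rw [Finset.sum_congr rfl fun j _ => hz j]
        simp
      · rw [if_neg h, Measure.finset_sum_apply]
        refine le_of_eq (Finset.sum_congr rfl fun j _ => ?_)
        rw [Measure.smul_apply, smul_eq_mul]
    calc (μ : Measure X) E
        = ∑ i : Fin M, ∑ j : Fin N, (μ : Measure X) (P i j ∩ E) := hdec
      _ ≤ ∑ i : Fin M, ∑ j : Fin N,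
            (w i j * ρ i j (thickening (3*ε) E) + w i j * θ') :=
          Finset.sum_le_sum fun i _ => Finset.sum_le_sum fun j _ => hpair i j
      _ = ∑ i : Fin M, ((∑ j : Fin N, w i j * ρ i j (thickening (3*ε) E))
            + (∑ j : Fin N, w i j) * θ') := by
          refine Finset.sum_congr rfl fun i _ => ?_
          rw [Finset.sum_add_distrib, Finset.sum_mul]
      _ ≤ ∑ i : Fin M, (T i (thickening (3*ε) E) + θ') := by
          refine Finset.sum_le_sum fun i _ => ?_
          gcongr
          · exact hTbound i
          · calc (∑ j : Fin N, w i j) * θ' ≤ 1 * θ' := mul_le_mul_left (hwle1 i) _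
              _ = θ' := one_mul _
      _ = μ'm (thickening (3*ε) E) + Θ := by
          rw [Finset.sum_add_distrib, Finset.sum_const, Finset.card_univ,
            Fintype.card_fin, nsmul_eq_mul, hΘdef, hμ'def, Measure.finset_sum_apply]
  -- assemble
  refine ⟨⟨μ'm, hprob⟩, ?_, ?_⟩
  · apply ProbabilityMeasure.toMeasure_injective
    exact (ProbabilityMeasure.toMeasure_map _ _).trans hmap
  · have hΘr : Θ = ENNReal.ofReal ((M : ℝ) * θ) := by
      rw [hΘdef, ENNReal.ofReal_mul (Nat.cast_nonneg M), ENNReal.ofReal_natCast]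
    have hMθ : 0 ≤ (M : ℝ) * θ := by positivity
    set δ₀ : ℝ≥0∞ := ENNReal.ofReal (3*ε + M*θ) with hδ₀def
    have hsplit1 : ENNReal.ofReal (3*ε) ≤ δ₀ :=
      ENNReal.ofReal_le_ofReal (by linarith)
    have hsplit2 : Θ ≤ δ₀ := by
      rw [hΘr]
      exact ENNReal.ofReal_le_ofReal (by linarith [hε])
    have hbound : levyProkhorovEDist μ'm (μ : Measure X) ≤ δ₀ := by
      apply levyProkhorovEDist_le_of_forall
      intro ε' E hlt htop hE
      have h3 : 3*ε ≤ ε'.toReal := by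
        have h1 : ENNReal.ofReal (3*ε) ≤ ε' := hsplit1.trans hlt.le
        calc 3*ε = (ENNReal.ofReal (3*ε)).toReal :=
              (ENNReal.toReal_ofReal (by positivity)).symm
          _ ≤ ε'.toReal := ENNReal.toReal_mono htop.ne h1
      have hΘε : Θ ≤ ε' := hsplit2.trans hlt.le
      constructor
      · calc μ'm E ≤ (μ : Measure X) (thickening (3*ε) E) + Θ := hest1 E hE
          _ ≤ (μ : Measure X) (thickening ε'.toReal E) + ε' :=
            add_le_add (measure_mono (thickening_mono h3 E)) hΘε
      · calc (μ : Measure X) E ≤ μ'm (thickening (3*ε) E) + Θ := hest2 E hE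
          _ ≤ μ'm (thickening ε'.toReal E) + ε' :=
            add_le_add (measure_mono (thickening_mono h3 E)) hΘε
    refine lt_of_le_of_lt hbound ?_
    rw [hδ₀def]
    refine (ENNReal.ofReal_lt_ofReal_iff hr).2 ?_
    have hMθ2 : (M : ℝ) * θ ≤ r / 8 := by
      rw [hθdef]
      have hpos : (0:ℝ) < 8*((M:ℝ)+1) := by positivity
      rw [← mul_div_assoc, div_le_div_iff₀ hpos (by norm_num : (0:ℝ) < 8)]
      nlinarith [hr.le, Nat.cast_nonneg (α := ℝ) M]
    rw [hεdef]
    linarith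

end Aux

open MeasureTheory

theorem pushforward_probabilityMeasure_isOpenMap_of_isOpenMap
    {X Y : Type*} [TopologicalSpace X] [CompactSpace X] [TopologicalSpace.MetrizableSpace X]
    [MeasurableSpace X] [BorelSpace X]
    [TopologicalSpace Y] [CompactSpace Y] [TopologicalSpace.MetrizableSpace Y]
    [MeasurableSpace Y] [BorelSpace Y]
    (f : X → Y) (hf : Continuous f) (hopen : IsOpenMap f)
    (hsurj : Function.Surjective f) :
    IsOpenMap
      (fun μ : ProbabilityMeasure X => μ.map hf.measurable.aemeasurable) := by
  letI : MetricSpace X := TopologicalSpace.metrizableSpaceMetric X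
  letI : MetricSpace Y := TopologicalSpace.metrizableSpaceMetric Y
  rcases isEmpty_or_nonempty X with hX | hX
  · intro U hU
    have : U = ∅ := eq_empty_of_forall_notMem fun μ _ => by
      have h1 := μ.2.measure_univ
      rw [Set.univ_eq_empty_iff.2 hX] at h1
      simp at h1
    simp [this]
  intro U hU
  rw [isOpen_iff_mem_nhds]
  rintro ν ⟨μ, hμU, rfl⟩
  -- find an LP-ball around μ inside U
  set h := LevyProkhorov.probabilityMeasureHomeomorph (Ω := X) with hh
  have hUopen : IsOpen (h.symm ⁻¹' U) := hU.preimage h.symm.continuous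
  obtain ⟨r, hr, hball⟩ := Metric.isOpen_iff.1 hUopen (h μ) (by simpa using hμU)
  obtain ⟨V, hV, hVlift⟩ := DE.key f hf hopen hsurj μ hr
  filter_upwards [hV] with ν hν
  obtain ⟨μ', hmap, hdist⟩ := hVlift ν hν
  refine ⟨μ', ?_, hmap⟩
  have : h μ' ∈ Metric.ball (h μ) r := by
    rw [Metric.mem_ball, MeasureTheory.LevyProkhorov.dist_probabilityMeasure_def, MeasureTheory.levyProkhorovDist]
    exact ENNReal.toReal_lt_of_lt_ofReal hdist
  simpa using hball this
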